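/- arXiv:1907.03245 — 2 statements merged into one kernel-verified Lean document; each statement's English description precedes it below -/
import Mathlib

section
/- Let A_k = (a_{ij,k}) be a sequence of N×N doubly stochastic matrices satisfying the uniform positivity and Q-joint strong connectivity conditions. Let z_{i,0} ∈ ℝ^m for i ∈ {1,…,N} be initial vectors whose sum is componentwise strictly negative, i.e., Σ_{i=1}^N z_{i,0} < 0 in every component, and define the iteration z_{i,k+1} = Σ_{j=1}^N a_{ij,k} z_{j,k}. Then there exists a finite k* > 0 such that for all k ≥ k* and all i ∈ {1,…,N}, every component of z_{i,k} is strictly negative (equivalently, for any fixed τ ∈ (0,1), sign(z_{i,k}) ≤ −τ·1_m componentwise for all k ≥ k*). -/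
section Aux
variable {N : ℕ} {A : ℕ → Fin N → Fin N → ℝ} {a : ℝ}
  {x : ℕ → Fin N → ℝ}

lemma aux_upstep (hAnn : ∀ k i j, 0 ≤ A k i j) (hArow : ∀ k i, ∑ j, A k i j = 1)
    (hx : ∀ k i, x (k + 1) i = ∑ j, A k i j * x k j)
    {k : ℕ} {M : ℝ} (hM : ∀ i, x k i ≤ M) : ∀ i, x (k + 1) i ≤ M := by
  intro i
  rw [hx]
  calc ∑ j, A k i j * x k j ≤ ∑ j, A k i j * M :=
        Finset.sum_le_sum fun j _ => mul_le_mul_of_nonneg_left (hM j) (hAnn k i j)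
    _ = M := by rw [← Finset.sum_mul, hArow, one_mul]

lemma aux_upiter (hAnn : ∀ k i j, 0 ≤ A k i j) (hArow : ∀ k i, ∑ j, A k i j = 1)
    (hx : ∀ k i, x (k + 1) i = ∑ j, A k i j * x k j)
    {k : ℕ} {M : ℝ} (hM : ∀ i, x k i ≤ M) : ∀ s i, x (k + s) i ≤ M := by
  intro s
  induction s with
  | zero => exact hM
  | succ s ih => exact aux_upstep hAnn hArow hx ih

lemma aux_keystep (hAnn : ∀ k i j, 0 ≤ A k i j) (hArow : ∀ k i, ∑ j, A k i j = 1)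
    (hx : ∀ k i, x (k + 1) i = ∑ j, A k i j * x k j)
    {k : ℕ} {M δ : ℝ} {i j : Fin N} (hM : ∀ i', x k i' ≤ M) (hδ : 0 ≤ δ)
    (haij : a ≤ A k i j) (hj : x k j ≤ M - δ) : x (k + 1) i ≤ M - a * δ := by
  rw [hx]
  have h1 : ∑ j', A k i j' * x k j' =
      A k i j * x k j + ∑ j' ∈ Finset.univ.erase j, A k i j' * x k j' :=
    (Finset.add_sum_erase _ _ (Finset.mem_univ j)).symm
  have h2 : ∑ j' ∈ Finset.univ.erase j, A k i j' = 1 - A k i j := by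
    have := (Finset.add_sum_erase Finset.univ (A k i) (Finset.mem_univ j)).symm
    rw [hArow] at this; linarith
  have h3 : ∑ j' ∈ Finset.univ.erase j, A k i j' * x k j' ≤ (1 - A k i j) * M := by
    rw [← h2, Finset.sum_mul]
    exact Finset.sum_le_sum fun j' _ => mul_le_mul_of_nonneg_left (hM j') (hAnn k i j')
  have h4 : A k i j * x k j ≤ A k i j * (M - δ) :=
    mul_le_mul_of_nonneg_left hj (hAnn k i j)
  have h5 : a * δ ≤ A k i j * δ := mul_le_mul_of_nonneg_right haij hδ
  rw [h1]; nlinarith [h3, h4, h5]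


lemma aux_propiter (hAnn : ∀ k i j, 0 ≤ A k i j) (hArow : ∀ k i, ∑ j, A k i j = 1)
    (hAdiag : ∀ k i, a ≤ A k i i) (ha : 0 < a)
    (hx : ∀ k i, x (k + 1) i = ∑ j, A k i j * x k j)
    {k : ℕ} {M : ℝ} (hMall : ∀ t i, x (k + t) i ≤ M) :
    ∀ s {t : ℕ} {i : Fin N} {δ : ℝ}, 0 ≤ δ → x (k + t) i ≤ M - δ →
      x (k + t + s) i ≤ M - a ^ s * δ := by
  intro s
  induction s with
  | zero => intro t i δ hδ h; simpa using h
  | succ s ih =>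
      intro t i δ hδ h
      have h1 : x (k + t + s) i ≤ M - a ^ s * δ := ih hδ h
      have h2 : ∀ i', x (k + t + s) i' ≤ M := by
        intro i'; have := hMall (t + s) i'; rwa [← Nat.add_assoc] at this
      have h3 := aux_keystep hAnn hArow hx h2
        (mul_nonneg (pow_nonneg ha.le s) hδ) (hAdiag (k + t + s) i) h1
      calc x (k + t + (s + 1)) i = x (k + t + s + 1) i := by ring_nf
        _ ≤ M - a * (a ^ s * δ) := h3
        _ = M - a ^ (s + 1) * δ := by ring

lemma aux_cross {α : Type*} {r : α → α → Prop} {P : α → Prop} :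
    ∀ {i j : α}, Relation.TransGen r i j → P i → ¬ P j →
      ∃ p q, P p ∧ ¬ P q ∧ r p q := by
  intro i j h
  induction h with
  | single h => exact fun hi hj => ⟨_, _, hi, hj, h⟩
  | @tail b c hab hbc ih =>
      intro hi hj
      by_cases hb : P b
      · exact ⟨b, c, hb, hj, hbc⟩
      · exact ih hi hb


lemma aux_grow {Q : ℕ} (hQ : 0 < Q) (hN : 0 < N) (ha : 0 < a)
    (hAnn : ∀ k i j, 0 ≤ A k i j)
    (hAdiag : ∀ k i, a ≤ A k i i)
    (hAa : ∀ k i j, 0 < A k i j → a ≤ A k i j)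
    (hArow : ∀ k i, ∑ j, A k i j = 1)
    (hconn : ∀ k : ℕ, ∀ i j : Fin N, i ≠ j →
      Relation.TransGen (fun p q : Fin N => ∃ l < Q, 0 < A (k + l) q p) i j)
    (hx : ∀ k i, x (k + 1) i = ∑ j, A k i j * x k j)
    {k : ℕ} {M δ : ℝ} (hδ : 0 ≤ δ) (hM : ∀ i, x k i ≤ M)
    {j0 : Fin N} (hj0 : x k j0 ≤ M - δ) :
    ∀ n, ∃ S : Finset (Fin N), min (n + 1) N ≤ S.card ∧
      ∀ i ∈ S, x (k + n * Q) i ≤ M - a ^ (n * Q) * δ := by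
  have hMall : ∀ t i, x (k + t) i ≤ M := fun t i => aux_upiter hAnn hArow hx hM t i
  have hprop := aux_propiter hAnn hArow hAdiag ha hx hMall
  intro n
  induction n with
  | zero => exact ⟨{j0}, by simp [hN], by simpa using hj0⟩
  | succ n ih =>
      obtain ⟨S, hcard, hS⟩ := ih
      have hβ : 0 ≤ a ^ (n * Q) * δ := mul_nonneg (pow_nonneg ha.le _) hδ
      have hexp : a ^ Q * (a ^ (n * Q) * δ) = a ^ ((n + 1) * Q) * δ := by
        rw [← mul_assoc, ← pow_add]; ring_nf
      have htime : k + (n + 1) * Q = k + n * Q + Q := by ring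
      by_cases hc : S = Finset.univ
      · refine ⟨Finset.univ, by simp, fun i _ => ?_⟩
        have := hprop Q hβ (hS i (hc ▸ Finset.mem_univ i))
        rw [htime]
        calc x (k + n * Q + Q) i ≤ M - a ^ Q * (a ^ (n * Q) * δ) := this
          _ = M - a ^ ((n + 1) * Q) * δ := by rw [hexp]
      · obtain ⟨i, hi⟩ : ∃ i, i ∉ S := by
          by_contra h; push_neg at h; exact hc (Finset.eq_univ_iff_forall.2 h)
        have hSne : S.Nonempty := by
          rw [← Finset.card_pos]; omega
        obtain ⟨j, hj⟩ := hSne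
        have hij : j ≠ i := fun h => hi (h ▸ hj)
        obtain ⟨p, q, hp, hq, l, hl, hpos⟩ := aux_cross (hconn (k + n * Q) j i hij) hj hi
        -- propagate p for l steps
        have h1 : x (k + n * Q + l) p ≤ M - a ^ l * (a ^ (n * Q) * δ) :=
          hprop l hβ (hS p hp)
        have h2 : ∀ i', x (k + n * Q + l) i' ≤ M := by
          intro i'; have := hMall (n * Q + l) i'; rwa [← Nat.add_assoc] at this
        have h3 : x (k + n * Q + l + 1) q ≤ M - a * (a ^ l * (a ^ (n * Q) * δ)) :=
          aux_keystep hAnn hArow hx h2 (mul_nonneg (pow_nonneg ha.le _) hβ)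
            (hAa _ _ _ hpos) h1
        have h4 : x (k + (n * Q + l + 1) + (Q - l - 1)) q ≤
            M - a ^ (Q - l - 1) * (a * (a ^ l * (a ^ (n * Q) * δ))) := by
          refine hprop (Q - l - 1) ?_ ?_
          · exact mul_nonneg ha.le (mul_nonneg (pow_nonneg ha.le _) hβ)
          · have : k + (n * Q + l + 1) = k + n * Q + l + 1 := by ring
            rw [this]; exact h3
        have h5 : x (k + (n + 1) * Q) q ≤ M - a ^ ((n + 1) * Q) * δ := by
          have ht : k + (n * Q + l + 1) + (Q - l - 1) = k + (n + 1) * Q := by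
            have : l + 1 ≤ Q := hl
            cases Nat.le.dest this with
            | intro c hcc => omega
          have he : a ^ (Q - l - 1) * (a * (a ^ l * (a ^ (n * Q) * δ)))
              = a ^ ((n + 1) * Q) * δ := by
            rw [show a ^ (Q - l - 1) * (a * (a ^ l * (a ^ (n * Q) * δ)))
                = a ^ ((Q - l - 1) + 1 + l + n * Q) * δ by
              rw [pow_add, pow_add, pow_add, pow_one]; ring]
            congr 2
            omega
          rw [← ht, ← he]; exact h4
        refine ⟨insert q S, ?_, ?_⟩
        · rw [Finset.card_insert_of_notMem hq]
          have hcle : S.card < N := by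
            have h1 : S.card ≤ N := by simpa using Finset.card_le_univ S
            rcases h1.lt_or_eq with h | h
            · exact h
            · exact absurd (Finset.eq_univ_of_card S (by simpa using h)) hc
          omega
        · intro i' hi'
          rcases Finset.mem_insert.1 hi' with rfl | hi'
          · exact h5
          · have := hprop Q hβ (hS i' hi')
            rw [htime]
            calc x (k + n * Q + Q) i' ≤ M - a ^ Q * (a ^ (n * Q) * δ) := this
              _ = M - a ^ ((n + 1) * Q) * δ := by rw [hexp]


lemma aux_sum (hAcol : ∀ k j, ∑ i, A k i j = 1)
    (hx : ∀ k i, x (k + 1) i = ∑ j, A k i j * x k j) :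
    ∀ k, ∑ i, x k i = ∑ i, x 0 i := by
  intro k
  induction k with
  | zero => rfl
  | succ k ih =>
      rw [← ih]
      calc ∑ i, x (k + 1) i = ∑ i, ∑ j, A k i j * x k j := by
            exact Finset.sum_congr rfl fun i _ => hx k i
        _ = ∑ j, (∑ i, A k i j) * x k j := by
            rw [Finset.sum_comm]
            exact Finset.sum_congr rfl fun j _ => (Finset.sum_mul _ _ _).symm
        _ = ∑ j, x k j := by
            exact Finset.sum_congr rfl fun j _ => by rw [hAcol, one_mul]

lemma aux_contract {Q : ℕ} (hQ : 0 < Q) (hN : 0 < N) (ha : 0 < a)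
    (hAnn : ∀ k i j, 0 ≤ A k i j)
    (hAdiag : ∀ k i, a ≤ A k i i)
    (hAa : ∀ k i j, 0 < A k i j → a ≤ A k i j)
    (hArow : ∀ k i, ∑ j, A k i j = 1)
    (hAcol : ∀ k j, ∑ i, A k i j = 1)
    (hconn : ∀ k : ℕ, ∀ i j : Fin N, i ≠ j →
      Relation.TransGen (fun p q : Fin N => ∃ l < Q, 0 < A (k + l) q p) i j)
    (hx : ∀ k i, x (k + 1) i = ∑ j, A k i j * x k j)
    {k : ℕ} {M : ℝ} (hM : ∀ i, x k i ≤ M) :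
    ∀ i, x (k + N * Q) i ≤ M - a ^ (N * Q) * (M - (∑ i, x 0 i) / N) := by
  set s : ℝ := (∑ i, x 0 i) / N with hs
  have hNne : (N : ℝ) ≠ 0 := Nat.cast_ne_zero.2 hN.ne'
  have hsumk : ∑ i, x k i = ∑ i, x 0 i := aux_sum hAcol hx k
  have hNs : (N : ℝ) * s = ∑ i, x 0 i := by rw [hs, mul_div_assoc']; exact mul_div_cancel_left₀ _ hNne
  -- exists j0 below average
  obtain ⟨j0, _, hj0⟩ : ∃ j0 ∈ Finset.univ, x k j0 ≤ s := by
    by_contra h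
    push_neg at h
    have : ∑ i, x k i > ∑ _i : Fin N, s :=
      Finset.sum_lt_sum_of_nonempty (Finset.univ_nonempty_iff.2 ⟨⟨0, hN⟩⟩)
        (fun i _ => h i (Finset.mem_univ i))
    rw [Finset.sum_const, Finset.card_univ, Fintype.card_fin, nsmul_eq_mul, hNs,
      hsumk] at this
    exact lt_irrefl _ this
  have hδ : 0 ≤ M - s := by
    have h1 : ∑ i, x k i ≤ ∑ _i : Fin N, M := Finset.sum_le_sum fun i _ => hM i
    rw [Finset.sum_const, Finset.card_univ, Fintype.card_fin, nsmul_eq_mul, hsumk,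
      ← hNs] at h1
    have := (mul_le_mul_iff_right₀ (by exact_mod_cast hN : (0:ℝ) < N)).1 h1
    linarith
  have hj0' : x k j0 ≤ M - (M - s) := by linarith
  obtain ⟨S, hcard, hS⟩ := aux_grow hQ hN ha hAnn hAdiag hAa hArow hconn hx hδ hM hj0' N
  have hSuniv : S = Finset.univ := by
    apply Finset.eq_univ_of_card
    have h1 : S.card ≤ Fintype.card (Fin N) := Finset.card_le_univ S
    simp only [Fintype.card_fin] at h1 ⊢
    omega
  intro i
  exact hS i (hSuniv ▸ Finset.mem_univ i)


lemma aux_neg {Q : ℕ} (hQ : 0 < Q) (hN : 0 < N) (ha : a ∈ Set.Ioo (0:ℝ) 1)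
    (hAnn : ∀ k i j, 0 ≤ A k i j)
    (hAdiag : ∀ k i, a ≤ A k i i)
    (hAa : ∀ k i j, 0 < A k i j → a ≤ A k i j)
    (hArow : ∀ k i, ∑ j, A k i j = 1)
    (hAcol : ∀ k j, ∑ i, A k i j = 1)
    (hconn : ∀ k : ℕ, ∀ i j : Fin N, i ≠ j →
      Relation.TransGen (fun p q : Fin N => ∃ l < Q, 0 < A (k + l) q p) i j)
    (hx : ∀ k i, x (k + 1) i = ∑ j, A k i j * x k j)
    (hsum0 : ∑ i, x 0 i < 0) :
    ∃ K : ℕ, ∀ k, K ≤ k → ∀ i, x k i < 0 := by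
  obtain ⟨ha0, ha1⟩ := ha
  set s : ℝ := (∑ i, x 0 i) / N with hs
  have hNpos : (0:ℝ) < N := by exact_mod_cast hN
  have hsneg : s < 0 := div_neg_of_neg_of_pos hsum0 hNpos
  have hne : (Finset.univ : Finset (Fin N)).Nonempty := Finset.univ_nonempty_iff.2 ⟨⟨0, hN⟩⟩
  set M0 : ℝ := Finset.univ.sup' hne (x 0) with hM0def
  have hM0 : ∀ i, x 0 i ≤ M0 := fun i => Finset.le_sup' (x 0) (Finset.mem_univ i)
  set c : ℝ := a ^ (N * Q) with hcdef
  have hc0 : 0 < c := pow_pos ha0 _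
  have hc1 : c ≤ 1 := pow_le_one₀ ha0.le ha1.le
  have hiter : ∀ n, ∀ i, x (n * (N * Q)) i ≤ s + (1 - c) ^ n * (M0 - s) := by
    intro n
    induction n with
    | zero => intro i; simpa using le_of_le_of_eq (hM0 i) (by ring)
    | succ n ih =>
        intro i
        have h := aux_contract hQ hN ha0 hAnn hAdiag hAa hArow hAcol hconn hx ih i
        have ht : (n + 1) * (N * Q) = n * (N * Q) + N * Q := by ring
        rw [ht]
        calc x (n * (N * Q) + N * Q) i
            ≤ s + (1 - c) ^ n * (M0 - s) - c * ((s + (1 - c) ^ n * (M0 - s)) - s) := h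
          _ = s + (1 - c) ^ (n + 1) * (M0 - s) := by rw [pow_succ]; ring
  have htend : Filter.Tendsto (fun n => (1 - c) ^ n * (M0 - s)) Filter.atTop (nhds 0) := by
    have h1 : Filter.Tendsto (fun n : ℕ => (1 - c) ^ n) Filter.atTop (nhds 0) :=
      tendsto_pow_atTop_nhds_zero_of_lt_one (by linarith) (by linarith)
    simpa using h1.mul_const (M0 - s)
  have hev : ∃ n, (1 - c) ^ n * (M0 - s) < -s / 2 := by
    have := htend.eventually_lt_const (by linarith : (0:ℝ) < -s / 2)
    exact this.exists
  obtain ⟨n, hn⟩ := hev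
  refine ⟨n * (N * Q), fun k hk i => ?_⟩
  have hK : ∀ i, x (n * (N * Q)) i ≤ s / 2 := by
    intro i
    have := hiter n i
    linarith
  have := aux_upiter hAnn hArow hx hK (k - n * (N * Q)) i
  rw [Nat.add_sub_cancel' hk] at this
  linarith

end Aux


/-- Averaging consensus drives states negative when the initial sum is negative:
with doubly stochastic weight matrices satisfying the uniform positivity and
Q-joint strong connectivity conditions, and initial vectors whose sum is
componentwise strictly negative, the iteration `z_{i,k+1} = Σⱼ a_{ij,k} z_{j,k}`
makes every component of every state strictly negative after finitely many steps. -/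
theorem consensus_eventually_negative (N m : ℕ) (hN : 0 < N)
    (A : ℕ → Fin N → Fin N → ℝ) (a : ℝ) (ha : a ∈ Set.Ioo (0 : ℝ) 1)
    (Q : ℕ) (hQ : 0 < Q)
    (hAnn : ∀ k i j, 0 ≤ A k i j)
    (hAdiag : ∀ k i, a ≤ A k i i)
    (hAa : ∀ k i j, 0 < A k i j → a ≤ A k i j)
    (hArow : ∀ k i, ∑ j, A k i j = 1)
    (hAcol : ∀ k j, ∑ i, A k i j = 1)
    (hconn : ∀ k : ℕ, ∀ i j : Fin N, i ≠ j →
      Relation.TransGen (fun p q : Fin N => ∃ l < Q, 0 < A (k + l) q p) i j)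
    (z : ℕ → Fin N → EuclideanSpace ℝ (Fin m))
    (hz0 : ∀ l, (∑ i, z 0 i) l < 0)
    (hzupd : ∀ k i, z (k + 1) i = ∑ j, A k i j • z k j) :
    ∃ kstar : ℕ, 0 < kstar ∧ ∀ k, kstar ≤ k → ∀ i l, z k i l < 0 := by
  have key : ∀ l : Fin m, ∃ K : ℕ, ∀ k, K ≤ k → ∀ i, z k i l < 0 := by
    intro l
    set x : ℕ → Fin N → ℝ := fun k i => z k i l with hxdef
    have hx : ∀ k i, x (k + 1) i = ∑ j, A k i j * x k j := by
      intro k i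
      show z (k + 1) i l = _
      rw [hzupd]
      show (∑ j, A k i j • z k j) l = ∑ j, A k i j * z k j l
      rw [WithLp.ofLp_sum, Finset.sum_apply]; rfl
    have hsum0 : ∑ i, x 0 i < 0 := by
      have h1 : (∑ i, z 0 i) l = ∑ i, z 0 i l := by rw [WithLp.ofLp_sum, Finset.sum_apply]
      have := hz0 l
      rw [h1] at this
      exact this
    exact aux_neg hQ hN ha hAnn hAdiag hAa hArow hAcol hconn hx hsum0
  choose K hK using key
  refine ⟨1 + Finset.univ.sup K, by omega, fun k hk i l => ?_⟩
  exact hK l k (le_trans (le_trans (Finset.le_sup (Finset.mem_univ l)) (by omega)) le_rfl) i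
end

section
/- Finite-time max-consensus: Let A_k = (a_{ij,k}) be a sequence of N×N matrices with nonnegative entries such that a_{ii,k} > 0 for all i and k, and such that for every k the directed graph on {1,…,N} whose edges are the pairs (j,i) with a_{ij,l} > 0 for some l ∈ {k,…,k+Q−1} is strongly connected. Define the in-neighbor sets N⁺_{i,k} = { j : a_{ij,k} > 0 } (which contain i), and given initial values s_{i,0} ∈ ℝ, define the max-consensus iteration s_{i,k+1} = max{ s_{j,k} : j ∈ N⁺_{i,k} }. Then for all k ≥ (N−1)·Q and all i ∈ {1,…,N}, s_{i,k} = max_{j∈{1,…,N}} s_{j,0}. -/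
lemma transgen_cross {α : Type*} (r : α → α → Prop) (S : α → Prop) {a b : α}
    (h : Relation.TransGen r a b) (ha : S a) (hb : ¬ S b) :
    ∃ p q, S p ∧ ¬ S q ∧ r p q := by
  induction h with
  | single h => exact ⟨_, _, ha, hb, h⟩
  | @tail b' c' h₁ h₂ ih =>
    by_cases hc : S b'
    · exact ⟨_, _, hc, hb, h₂⟩
    · exact ih hc

/-- Finite-time max-consensus: with weight matrices having positive diagonal and
Q-jointly strongly connected communication graphs, the max-consensus iteration
`s_{i,k+1} = max{ s_{j,k} : a_{ij,k} > 0 }` reaches, after at most `(N-1)·Q` steps,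
the maximum of the initial values at every agent. -/
theorem finite_time_max_consensus (N Q : ℕ) (hN : 0 < N) (hQ : 0 < Q)
    (A : ℕ → Fin N → Fin N → ℝ)
    (hAnn : ∀ k i j, 0 ≤ A k i j)
    (hAdiag : ∀ k i, 0 < A k i i)
    (hconn : ∀ k : ℕ, ∀ i j : Fin N, i ≠ j →
      Relation.TransGen (fun p q : Fin N => ∃ l < Q, 0 < A (k + l) q p) i j)
    (s : ℕ → Fin N → ℝ)
    (hupd : ∀ k i, (∃ j, 0 < A k i j ∧ s (k + 1) i = s k j) ∧
      ∀ j, 0 < A k i j → s k j ≤ s (k + 1) i) :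
    ∀ k, (N - 1) * Q ≤ k → ∀ i,
      IsGreatest (Set.range fun j => s 0 j) (s k i) := by
  haveI : Nonempty (Fin N) := Fin.pos_iff_nonempty.mp hN
  obtain ⟨i₀, hi₀⟩ := Finite.exists_max (s 0)
  set M := s 0 i₀ with hM
  -- monotonicity in time
  have mono1 : ∀ k i, s k i ≤ s (k + 1) i := fun k i =>
    (hupd k i).2 i (hAdiag k i)
  have mono : ∀ k k', k ≤ k' → ∀ i, s k i ≤ s k' i := by
    intro k k' hkk
    induction k' with
    | zero =>
      intro i
      have hk0 : k = 0 := by omega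
      subst hk0; exact le_rfl
    | succ n ih =>
      intro i
      rcases Nat.lt_or_ge k (n + 1) with h | h
      · exact le_trans (ih (by omega) i) (mono1 n i)
      · have : k = n + 1 := by omega
        subst this; exact le_rfl
  -- upper bound
  have upper : ∀ k i, s k i ≤ M := by
    intro k
    induction k with
    | zero => exact hi₀
    | succ n ih =>
      intro i
      obtain ⟨j, _, heq⟩ := (hupd n i).1
      rw [heq]; exact ih j
  -- the set of nodes that have reached M
  set T : ℕ → Finset (Fin N) := fun k => Finset.univ.filter (fun i => M ≤ s k i) with hT
  have Tmono : ∀ k k', k ≤ k' → T k ⊆ T k' := by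
    intro k k' hkk i hi
    simp only [hT, Finset.mem_filter, Finset.mem_univ, true_and] at hi ⊢
    exact le_trans hi (mono k k' hkk i)
  have key : ∀ m, min (m + 1) N ≤ (T (m * Q)).card := by
    intro m
    induction m with
    | zero =>
      have : i₀ ∈ T 0 := by simp [hT]; exact le_rfl
      have hcard := Finset.card_pos.mpr ⟨i₀, this⟩
      rw [Nat.zero_mul]
      omega
    | succ m ih =>
      by_cases hall : (T (m * Q)).card = N
      · have h1 : (T (m * Q)).card ≤ (T ((m + 1) * Q)).card :=
          Finset.card_le_card (Tmono _ _ (by nlinarith) )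
        omega
      · have hcardlt : (T (m * Q)).card < N := by
          have := Finset.card_le_card (Finset.subset_univ (T (m * Q)))
          simp only [Finset.card_univ, Fintype.card_fin] at this
          omega
        -- there is i ∉ T (m*Q)
        have hne : ∃ i : Fin N, i ∉ T (m * Q) := by
          by_contra hc
          push_neg at hc
          have : (Finset.univ : Finset (Fin N)) ⊆ T (m * Q) := fun x _ => hc x
          have := Finset.card_le_card this
          simp only [Finset.card_univ, Fintype.card_fin] at this
          omega
        obtain ⟨i, hi⟩ := hne
        have hj : i₀ ∈ T (m * Q) := Tmono 0 (m * Q) (Nat.zero_le _) (by simp [hT]; exact le_rfl)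
        have hij : i ≠ i₀ := fun h => hi (h ▸ hj)
        have hpath := hconn (m * Q) i₀ i (Ne.symm hij)
        obtain ⟨p, q, hp, hq, l, hl, hA⟩ :=
          transgen_cross _ (fun x => x ∈ T (m * Q)) hpath hj hi
        -- q reaches M by time (m+1)*Q
        have hMp : M ≤ s (m * Q) p := by
          simpa [hT] using hp
        have h2 : M ≤ s (m * Q + l + 1) q := by
          calc M ≤ s (m * Q) p := hMp
            _ ≤ s (m * Q + l) p := mono _ _ (by omega) p
            _ ≤ s (m * Q + l + 1) q := (hupd (m * Q + l) q).2 p hA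
        have hqin : q ∈ T ((m + 1) * Q) := by
          simp only [hT, Finset.mem_filter, Finset.mem_univ, true_and]
          exact le_trans h2 (mono _ _ (by nlinarith) q)
        have hss : T (m * Q) ⊂ T ((m + 1) * Q) :=
          ⟨Tmono _ _ (by nlinarith), fun hc => hq (hc hqin)⟩
        have := Finset.card_lt_card hss
        omega
  -- conclude
  have hTall : ∀ i : Fin N, M ≤ s ((N - 1) * Q) i := by
    intro i
    have := key (N - 1)
    have hmin : min (N - 1 + 1) N = N := by omega
    rw [hmin] at this
    have : T ((N - 1) * Q) = Finset.univ := by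
      apply Finset.eq_univ_of_card
      have := Finset.card_le_card (Finset.subset_univ (T ((N - 1) * Q)))
      simp only [Finset.card_univ, Fintype.card_fin] at this ⊢
      omega
    have hi : i ∈ T ((N - 1) * Q) := this ▸ Finset.mem_univ i
    simpa [hT] using hi
  intro k hk i
  have hle : M ≤ s k i := le_trans (hTall i) (mono _ _ hk i)
  have heq : s k i = M := le_antisymm (upper k i) hle
  constructor
  · exact ⟨i₀, heq.symm⟩
  · rintro x ⟨j, rfl⟩
    exact le_trans (hi₀ j) hle
end
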